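/- Let B = [−1,1]×[−1,1] ⊂ ℝ² and define the 1-form ω(x,y) := (sin x + H(y)) dy, where H is the Heaviside function (H(y) = 0 for y < 0, H(y) = 1 for y ≥ 0). Then: (1) for every h = (h₁,h₂) with 0 < h_i < 2 and every x = (x₁,x₂) such that x + [0,h₁]×[0,h₂] ⊆ B, one has ∫_{∂(x+β_h)} ω = h₂ (sin(x₁+h₁) − sin x₁), where β_h = [0,h₁]×[0,h₂]; (2) consequently ω is flux-continuous on B; (3) ω is not continuous at any point (x₁, 0) ∈ B (its dy-coefficient has distinct one-sided limits there). -/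
import Mathlib


open scoped BigOperators
open BoxIntegral Set

noncomputable section

/-- Riemann integrability of `f` over the closed block `[a, b] ⊆ ℝ^k`. -/
def RiemannIntegrableOn {k : ℕ} (f : (Fin k → ℝ) → ℝ) (a b : Fin k → ℝ) : Prop :=
  ∃ h : ∀ i, a i < b i,
    BoxIntegral.Integrable ⟨a, b, h⟩ BoxIntegral.IntegrationParams.Riemann f
      BoxIntegral.BoxAdditiveMap.volume

/-- The Riemann integral of `f` over the closed block `[a, b] ⊆ ℝ^k` (junk value if
the block is degenerate or `f` is not integrable). -/
def riemannIntegral {k : ℕ} (f : (Fin k → ℝ) → ℝ) (a b : Fin k → ℝ) : ℝ :=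
  if h : ∀ i, a i < b i then
    BoxIntegral.integral ⟨a, b, h⟩ BoxIntegral.IntegrationParams.Riemann f
      BoxIntegral.BoxAdditiveMap.volume
  else 0

/-- The volume of the block `[a,b]`. -/
def blockVol {k : ℕ} (a b : Fin k → ℝ) : ℝ := ∏ i, (b i - a i)

/-- The length of the longest side of the block `[a,b]`. -/
def blockL {k : ℕ} (a b : Fin k → ℝ) : ℝ := ⨆ i, (b i - a i)

/-- The length of the shortest side of the block `[a,b]`. -/
def blockl {k : ℕ} (a b : Fin k → ℝ) : ℝ := ⨅ i, (b i - a i)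

/-- `k`-forms on (subsets of) `ℝ^n`, with no regularity assumed. -/
abbrev Form (n k : ℕ) := (Fin n → ℝ) → AlternatingMap ℝ (Fin n → ℝ) ℝ (Fin k)

/-- The `i`-th standard basis vector of `ℝ^n`. -/
def e {n : ℕ} (i : Fin n) : Fin n → ℝ := Pi.single i 1

/-- The integrand of a `k`-form `ω` on the face of a `(k+1)`-block obtained by freezing the
`i`-th coordinate at the value `c`; it is evaluated on the standard basis vectors
`(e_1, …, ê_i, …, e_{k+1})`. -/
def faceFun {k : ℕ} (ω : Form (k+1) k) (i : Fin (k+1)) (c : ℝ) : (Fin k → ℝ) → ℝ :=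
  fun t => ω (i.insertNth c t) fun l => e (i.succAbove l)

/-- The flux `∫_{∂B} ω` of the `k`-form `ω` through the boundary of the `(k+1)`-block
`[a,b]`, i.e. the alternating sum `∑_{i,j} (-1)^{i+j}` of the Riemann integrals of the
face restrictions of `ω`. -/
def boundaryIntegral {k : ℕ} (ω : Form (k+1) k) (a b : Fin (k+1) → ℝ) : ℝ :=
  ∑ i : Fin (k+1), (-1 : ℝ) ^ (i : ℕ) *
    (riemannIntegral (faceFun ω i (b i)) (a ∘ i.succAbove) (b ∘ i.succAbove)
      - riemannIntegral (faceFun ω i (a i)) (a ∘ i.succAbove) (b ∘ i.succAbove))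

/-- All the face integrals making up `∫_{∂B} ω` exist as Riemann integrals. -/
def BoundaryIntegrable {k : ℕ} (ω : Form (k+1) k) (a b : Fin (k+1) → ℝ) : Prop :=
  ∀ i : Fin (k+1), ∀ c ∈ ({a i, b i} : Set ℝ),
    RiemannIntegrableOn (faceFun ω i c) (a ∘ i.succAbove) (b ∘ i.succAbove)

/-- `ω` is flux-continuous on the `(k+1)`-block `[a,b]`: for every block
`β = [0,h₁]×…×[0,h_{k+1}]` with `0 < hᵢ < bᵢ - aᵢ`, the function `x ↦ ∫_{∂(x+β)} ω` is
continuous at every point `x` with `x + β ⊆ [a,b]`. -/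
def FluxContinuousOn {k : ℕ} (ω : Form (k+1) k) (a b : Fin (k+1) → ℝ) : Prop :=
  ∀ h : Fin (k+1) → ℝ, (∀ i, 0 < h i ∧ h i < b i - a i) →
    ∀ x ∈ {y : Fin (k+1) → ℝ | ∀ i, a i ≤ y i ∧ y i + h i ≤ b i},
      ContinuousWithinAt (fun y => boundaryIntegral ω y (fun i => y i + h i))
        {y : Fin (k+1) → ℝ | ∀ i, a i ≤ y i ∧ y i + h i ≤ b i} x

/-- The pullback of the `k`-form `ω` by the (differentiable) map `ψ`. -/
def pullback {p n k : ℕ} (ψ : (Fin p → ℝ) → (Fin n → ℝ)) (ω : Form n k) : Form p k :=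
  fun t => (ω (ψ t)).compLinearMap (fderiv ℝ ψ t : (Fin p → ℝ) →L[ℝ] (Fin n → ℝ)).toLinearMap

/-- `ω` is flux-integrable around `x ∈ U`: for every `C¹` map `φ : A → U` from an open
set `A ⊆ ℝ^{k+1}` with `φ p = x` and every `(k+1)`-block `B ⊆ A` with `p ∈ B`, the
pullback `φ*ω` is Riemann integrable over `∂B`. -/
def FluxIntegrableAround {n k : ℕ} (U : Set (Fin n → ℝ)) (ω : Form n k)
    (x : Fin n → ℝ) : Prop :=
  ∀ (A : Set (Fin (k+1) → ℝ)) (φ : (Fin (k+1) → ℝ) → (Fin n → ℝ)) (p : Fin (k+1) → ℝ),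
    IsOpen A → ContDiffOn ℝ 1 φ A → Set.MapsTo φ A U → p ∈ A → φ p = x →
    ∀ a b : Fin (k+1) → ℝ, (∀ i, a i < b i) → Set.Icc a b ⊆ A → p ∈ Set.Icc a b →
      BoundaryIntegrable (pullback φ ω) a b

/-- `ω` is derivable at `x ∈ U` in the infinitesimal-flux sense, with exterior derivative
`D ∈ Λ^{k+1}(ℝ^n)^*`. -/
def HasFluxDerivAt {n k : ℕ} (U : Set (Fin n → ℝ)) (ω : Form n k)
    (D : AlternatingMap ℝ (Fin n → ℝ) ℝ (Fin (k+1))) (x : Fin n → ℝ) : Prop :=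
  FluxIntegrableAround U ω x ∧
  ∀ (v : Fin (k+1) → (Fin n → ℝ))
    (A : Set (Fin (k+1) → ℝ)) (φ : (Fin (k+1) → ℝ) → (Fin n → ℝ)) (p : Fin (k+1) → ℝ),
    IsOpen A → ContDiffOn ℝ 1 φ A → Set.MapsTo φ A U → p ∈ A → φ p = x →
    (∀ i, fderiv ℝ φ p (e i) = v i) →
    ∀ ε > (0:ℝ), ∀ K > (1:ℝ), ∃ δ > (0:ℝ), ∀ a b : Fin (k+1) → ℝ,
      (∀ i, a i < b i) → Set.Icc a b ⊆ A → p ∈ Set.Icc a b →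
      blockL a b < δ → blockL a b / blockl a b < K →
      |D v - (1 / blockVol a b) * boundaryIntegral (pullback φ ω) a b| < ε


/-- The Heaviside step function. -/
def Heaviside (y : ℝ) : ℝ := if 0 ≤ y then 1 else 0

/-- The constant `1`-form `dy` on `ℝ²`. -/
def dy : AlternatingMap ℝ (Fin 2 → ℝ) ℝ (Fin 1) :=
  AlternatingMap.ofSubsingleton ℝ (Fin 2 → ℝ) ℝ (0 : Fin 1) (LinearMap.proj 1)

/-- The `1`-form `ω(x,y) = (sin x + H(y)) dy` on `B = [-1,1] × [-1,1]`. -/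
def heavisideForm : Form 2 1 :=
  fun p => (Real.sin (p 0) + Heaviside (p 1)) • dy


open MeasureTheory in
lemma heaviside_hasIntegral (I : BoxIntegral.Box (Fin 1)) :
    BoxIntegral.HasIntegral I BoxIntegral.IntegrationParams.Riemann
      (fun t => Heaviside (t 0)) BoxIntegral.BoxAdditiveMap.volume
      ((volume ((I : Set (Fin 1 → ℝ)) ∩ {t | 0 ≤ t 0})).toReal) := by
  rw [BoxIntegral.hasIntegral_iff]
  intro ε hε
  set P : Set (Fin 1 → ℝ) := {t | 0 ≤ t 0} with hP
  have hPmeas : MeasurableSet P := measurableSet_Ici.preimage (measurable_pi_apply 0)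
  set S : Set (Fin 1 → ℝ) := {t | t 0 ∈ Ico (-(ε/4)) (ε/4)} with hS
  have hSmeas : MeasurableSet S := measurableSet_Ico.preimage (measurable_pi_apply 0)
  refine ⟨fun _ _ => ⟨ε/4, Set.mem_Ioi.2 (by linarith)⟩, fun c hR x => rfl, ?_⟩
  intro c π hmem hpart
  have hSpi : S = Set.pi Set.univ (fun _ : Fin 1 => Ico (-(ε/4)) (ε/4)) := by
    ext t
    simp only [hS, Set.mem_setOf_eq, Set.mem_pi, Set.mem_univ, forall_true_left]
    exact ⟨fun h i => (Fin.eq_zero i) ▸ h, fun h => h 0⟩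
  have hvolS : volume S = ENNReal.ofReal (ε/2) := by
    rw [hSpi, volume_pi_pi]
    simp only [Real.volume_Ico, Fin.prod_univ_one]
    norm_num
    ring_nf
  have key : ∀ J ∈ π.boxes,
      |(volume (J : Set (Fin 1 → ℝ))).toReal * Heaviside (π.tag J 0)
        - (volume ((J : Set (Fin 1 → ℝ)) ∩ P)).toReal|
      ≤ (volume ((J : Set (Fin 1 → ℝ)) ∩ S)).toReal := by
    intro J hJ
    have hsub := hmem.isSubordinate J hJ
    have hdist : ∀ t ∈ (J : Set (Fin 1 → ℝ)), |t 0 - π.tag J 0| ≤ ε/4 := by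
      intro t ht
      have h1 : dist (t 0) (π.tag J 0) ≤ dist t (π.tag J) := dist_le_pi_dist t (π.tag J) 0
      have h2 : dist t (π.tag J) ≤ ε/4 := by
        have := hsub (BoxIntegral.Box.coe_subset_Icc ht)
        simpa [Metric.mem_closedBall] using this
      rw [Real.dist_eq] at h1
      linarith
    by_cases hx : 0 ≤ π.tag J 0
    · have hH : Heaviside (π.tag J 0) = 1 := if_pos hx
      rw [hH, mul_one]
      have hsplit : volume (J : Set (Fin 1 → ℝ))
          = volume ((J : Set (Fin 1 → ℝ)) ∩ P) + volume ((J : Set (Fin 1 → ℝ)) \ P) :=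
        (measure_inter_add_diff _ hPmeas).symm
      have hfin1 : volume ((J : Set (Fin 1 → ℝ)) ∩ P) ≠ ⊤ :=
        ((measure_mono inter_subset_left).trans_lt (J.measure_coe_lt_top volume)).ne
      have hfin2 : volume ((J : Set (Fin 1 → ℝ)) \ P) ≠ ⊤ :=
        ((measure_mono diff_subset).trans_lt (J.measure_coe_lt_top volume)).ne
      have : (volume (J : Set (Fin 1 → ℝ))).toReal
          = (volume ((J : Set (Fin 1 → ℝ)) ∩ P)).toReal
            + (volume ((J : Set (Fin 1 → ℝ)) \ P)).toReal := by
        rw [hsplit, ENNReal.toReal_add hfin1 hfin2]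
      rw [this, add_sub_cancel_left, abs_of_nonneg ENNReal.toReal_nonneg]
      refine ENNReal.toReal_mono ((measure_mono inter_subset_left).trans_lt
        (J.measure_coe_lt_top volume)).ne (measure_mono ?_)
      rintro t ⟨htJ, htP⟩
      have h0 : t 0 < 0 := lt_of_not_ge htP
      have habs := abs_le.1 (hdist t htJ)
      refine ⟨htJ, Set.mem_Ico.2 ⟨by linarith [habs.1, habs.2], by linarith⟩⟩
    · have hH : Heaviside (π.tag J 0) = 0 := if_neg hx
      rw [hH, mul_zero, zero_sub, abs_neg, abs_of_nonneg ENNReal.toReal_nonneg]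
      refine ENNReal.toReal_mono ((measure_mono inter_subset_left).trans_lt
        (J.measure_coe_lt_top volume)).ne (measure_mono ?_)
      rintro t ⟨htJ, htP⟩
      have h0 : (0:ℝ) ≤ t 0 := htP
      have habs := abs_le.1 (hdist t htJ)
      push_neg at hx
      exact ⟨htJ, Set.mem_Ico.2 ⟨by linarith, by linarith [habs.1, habs.2]⟩⟩
  have hdisj : ∀ T : Set (Fin 1 → ℝ), MeasurableSet T →
      volume ((I : Set (Fin 1 → ℝ)) ∩ T)
        = ∑ J ∈ π.boxes, volume ((J : Set (Fin 1 → ℝ)) ∩ T) := by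
    intro T hT
    have h1 : ((I : Set (Fin 1 → ℝ)) ∩ T) = ⋃ J ∈ π.boxes, ((J : Set (Fin 1 → ℝ)) ∩ T) := by
      rw [← hpart.iUnion_eq, BoxIntegral.Prepartition.iUnion_def', Set.iUnion₂_inter]
    rw [h1]
    exact measure_biUnion_finset
      (fun J hJ K hK hne =>
        ((π.toPrepartition.pairwiseDisjoint hJ hK hne).mono inter_subset_left inter_subset_left))
      (fun J _ => J.measurableSet_coe.inter hT)
  have hfinJ : ∀ (J : BoxIntegral.Box (Fin 1)) (T : Set (Fin 1 → ℝ)),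
      volume ((J : Set (Fin 1 → ℝ)) ∩ T) ≠ ⊤ :=
    fun J T => ((measure_mono inter_subset_left).trans_lt (J.measure_coe_lt_top volume)).ne
  have hP_sum : (volume ((I : Set (Fin 1 → ℝ)) ∩ P)).toReal
      = ∑ J ∈ π.boxes, (volume ((J : Set (Fin 1 → ℝ)) ∩ P)).toReal := by
    rw [hdisj P hPmeas, ENNReal.toReal_sum (fun J _ => hfinJ J P)]
  have hS_sum : ∑ J ∈ π.boxes, (volume ((J : Set (Fin 1 → ℝ)) ∩ S)).toReal ≤ ε/2 := by
    rw [← ENNReal.toReal_sum (fun J _ => hfinJ J S), ← hdisj S hSmeas]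
    have : volume ((I : Set (Fin 1 → ℝ)) ∩ S) ≤ volume S := measure_mono inter_subset_right
    calc (volume ((I : Set (Fin 1 → ℝ)) ∩ S)).toReal
        ≤ (volume S).toReal := ENNReal.toReal_mono (by rw [hvolS]; exact ENNReal.ofReal_ne_top) this
      _ = ε/2 := by rw [hvolS, ENNReal.toReal_ofReal (by linarith)]
  have hIS : BoxIntegral.integralSum (fun t => Heaviside (t 0))
      BoxIntegral.BoxAdditiveMap.volume π
      = ∑ J ∈ π.boxes, (volume (J : Set (Fin 1 → ℝ))).toReal * Heaviside (π.tag J 0) := by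
    refine Finset.sum_congr rfl fun J _ => ?_
    rw [BoxIntegral.BoxAdditiveMap.volume_apply, ← BoxIntegral.Box.volume_apply', smul_eq_mul]
  rw [Real.dist_eq, hIS, hP_sum, ← Finset.sum_sub_distrib]
  calc |∑ J ∈ π.boxes, ((volume (J : Set (Fin 1 → ℝ))).toReal * Heaviside (π.tag J 0)
          - (volume ((J : Set (Fin 1 → ℝ)) ∩ P)).toReal)|
      ≤ ∑ J ∈ π.boxes, |(volume (J : Set (Fin 1 → ℝ))).toReal * Heaviside (π.tag J 0)
          - (volume ((J : Set (Fin 1 → ℝ)) ∩ P)).toReal| := Finset.abs_sum_le_sum_abs _ _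
    _ ≤ ∑ J ∈ π.boxes, (volume ((J : Set (Fin 1 → ℝ)) ∩ S)).toReal :=
        Finset.sum_le_sum key
    _ ≤ ε/2 := hS_sum
    _ ≤ ε := by linarith

lemma faceFun_heaviside_zero (c : ℝ) :
    faceFun heavisideForm 0 c = fun t => Real.sin c + Heaviside (t 0) := by
  funext t
  have h : faceFun heavisideForm 0 c t
      = (Real.sin c + Heaviside (t 0)) * (e (1 : Fin 2) 1) := rfl
  rw [h]
  simp [e]

lemma faceFun_heaviside_one (c : ℝ) :
    faceFun heavisideForm 1 c = fun _ => (0:ℝ) := by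
  funext t
  have h : faceFun heavisideForm 1 c t
      = (Real.sin (t 0) + Heaviside c) * (e (0 : Fin 2) 1) := rfl
  rw [h]
  simp [e]

lemma riemannIntegral_zero {k : ℕ} (a b : Fin k → ℝ) :
    riemannIntegral (fun _ => (0:ℝ)) a b = 0 := by
  unfold riemannIntegral
  split
  · exact BoxIntegral.integral_zero
  · rfl

open MeasureTheory in
lemma riemannIntegral_heaviside_face (c : ℝ) (a b : Fin 1 → ℝ) (hab : ∀ i, a i < b i) :
    riemannIntegral (fun t => Real.sin c + Heaviside (t 0)) a b
      = (b 0 - a 0) * Real.sin c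
        + (volume (((⟨a, b, hab⟩ : BoxIntegral.Box (Fin 1)) : Set (Fin 1 → ℝ))
            ∩ {t | 0 ≤ t 0})).toReal := by
  have hc := BoxIntegral.hasIntegral_const (I := (⟨a, b, hab⟩ : BoxIntegral.Box (Fin 1)))
    (l := BoxIntegral.IntegrationParams.Riemann) (vol := BoxIntegral.BoxAdditiveMap.volume)
    (Real.sin c)
  rw [BoxIntegral.BoxAdditiveMap.volume_apply] at hc
  have hH := heaviside_hasIntegral ⟨a, b, hab⟩
  have hsum := hc.add hH
  have hfun : ((fun _ : Fin 1 → ℝ => Real.sin c) + fun t => Heaviside (t 0))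
      = fun t => Real.sin c + Heaviside (t 0) := rfl
  rw [hfun] at hsum
  have hval : (∏ j, ((⟨a, b, hab⟩ : BoxIntegral.Box (Fin 1)).upper j
        - (⟨a, b, hab⟩ : BoxIntegral.Box (Fin 1)).lower j)) • Real.sin c
      = (b 0 - a 0) * Real.sin c := by
    simp [Fin.prod_univ_one, smul_eq_mul]
  rw [hval] at hsum
  rw [riemannIntegral, dif_pos hab]
  exact hsum.integral_eq

open MeasureTheory in
lemma heaviside_boundary (x h : Fin 2 → ℝ) (h1 : 0 < h 1) :
    boundaryIntegral heavisideForm x (fun i => x i + h i)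
      = h 1 * (Real.sin (x 0 + h 0) - Real.sin (x 0)) := by
  have hA0 : (x ∘ Fin.succAbove (0:Fin 2)) = fun _ : Fin 1 => x 1 := by
    funext j; rw [Fin.eq_zero j]; rfl
  have hB0 : ((fun i => x i + h i) ∘ Fin.succAbove (0:Fin 2)) = fun _ : Fin 1 => x 1 + h 1 := by
    funext j; rw [Fin.eq_zero j]; rfl
  have hab : ∀ j : Fin 1, (fun _ : Fin 1 => x 1) j < (fun _ : Fin 1 => x 1 + h 1) j :=
    fun j => by simpa using h1
  rw [boundaryIntegral, Fin.sum_univ_two]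
  rw [hA0, hB0, faceFun_heaviside_zero, faceFun_heaviside_zero,
      faceFun_heaviside_one, faceFun_heaviside_one,
      riemannIntegral_zero,
      riemannIntegral_heaviside_face _ _ _ hab, riemannIntegral_heaviside_face _ _ _ hab]
  simp only [Fin.val_zero, Fin.val_one, pow_zero, pow_one]
  ring

lemma heavisideForm_e1 (p : Fin 2 → ℝ) :
    heavisideForm p (fun _ : Fin 1 => e 1) = Real.sin (p 0) + Heaviside (p 1) := by
  have h : heavisideForm p (fun _ : Fin 1 => e 1)
      = (Real.sin (p 0) + Heaviside (p 1)) * (e (1 : Fin 2) 1) := rfl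
  rw [h]
  simp [e]


/-- On `B = [-1,1]²`, the form `ω = (sin x + H(y)) dy` (with `H` the Heaviside function)
satisfies: (1) for every admissible `β_h = [0,h₁]×[0,h₂]` and every `x` with `x + β_h ⊆ B`,
`∫_{∂(x+β_h)} ω = h₂ (sin(x₁+h₁) - sin x₁)`; (2) `ω` is flux-continuous on `B`; but
(3) `ω` is not continuous at any point `(x₁, 0) ∈ B` (its `dy`-coefficient has distinct
one-sided limits there). -/
theorem heaviside_flux_continuous_not_continuous :
    (∀ h : Fin 2 → ℝ, (∀ i, 0 < h i ∧ h i < 2) →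
      ∀ x : Fin 2 → ℝ, (∀ i, (-1:ℝ) ≤ x i ∧ x i + h i ≤ 1) →
        boundaryIntegral heavisideForm x (fun i => x i + h i)
          = h 1 * (Real.sin (x 0 + h 0) - Real.sin (x 0))) ∧
    FluxContinuousOn heavisideForm (fun _ => (-1:ℝ)) (fun _ => (1:ℝ)) ∧
    (∀ x : Fin 2 → ℝ, x 1 = 0 →
      x ∈ Set.Icc (fun _ => (-1:ℝ)) (fun _ => (1:ℝ)) →
      ¬ ContinuousWithinAt (fun p => heavisideForm p fun _ : Fin 1 => e 1)
          (Set.Icc (fun _ => (-1:ℝ)) (fun _ => (1:ℝ))) x) := by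
  have part1 : ∀ h : Fin 2 → ℝ, (∀ i, 0 < h i ∧ h i < 2) →
      ∀ x : Fin 2 → ℝ, (∀ i, (-1:ℝ) ≤ x i ∧ x i + h i ≤ 1) →
        boundaryIntegral heavisideForm x (fun i => x i + h i)
          = h 1 * (Real.sin (x 0 + h 0) - Real.sin (x 0)) :=
    fun h hh x _ => heaviside_boundary x h (hh 1).1
  refine ⟨part1, ?_, ?_⟩
  · intro h hh x hx
    have hg : Continuous fun y : Fin 2 → ℝ =>
        h 1 * (Real.sin (y 0 + h 0) - Real.sin (y 0)) := by fun_prop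
    refine (hg.continuousWithinAt).congr ?_ ?_
    · intro y _
      exact heaviside_boundary y h (hh 1).1
    · exact heaviside_boundary x h (hh 1).1
  · intro x hx1 hxIcc hcont
    set s := Set.Icc (fun _ => (-1:ℝ)) (fun _ => (1:ℝ)) with hs
    set φ : ℝ → (Fin 2 → ℝ) := fun t => Function.update x 1 t with hφ
    have hφ1 : ∀ t, φ t 1 = t := fun t => Function.update_self _ _ _
    have hφ0 : ∀ t, φ t 0 = x 0 := fun t => Function.update_of_ne (by decide) _ _
    have hφzero : φ 0 = x := by
      funext i
      by_cases hi : i = 1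
      · subst hi; rw [hφ1, hx1]
      · exact Function.update_of_ne hi _ _
    have hφt : Filter.Tendsto φ (nhdsWithin (0:ℝ) (Set.Iio 0)) (nhds x) := by
      have hc : Filter.Tendsto φ (nhds 0) (nhds x) := by
        refine tendsto_pi_nhds.2 fun i => ?_
        by_cases hi : i = 1
        · subst hi
          have heq : (fun t => φ t 1) = fun t => t := funext hφ1
          rw [heq, hx1]
          exact fun u hu => hu
        · have heq : (fun t => φ t i) = fun _ => x i :=
            funext fun t => Function.update_of_ne hi t x
          rw [heq]
          exact tendsto_const_nhds
      exact hc.mono_left nhdsWithin_le_nhds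
    have hxmem := Set.mem_Icc.1 hxIcc
    have hev : ∀ᶠ t in nhdsWithin (0:ℝ) (Set.Iio 0), φ t ∈ s := by
      have hIoo : Set.Ioo (-1:ℝ) 0 ∈ nhdsWithin (0:ℝ) (Set.Iio 0) := by
        rw [show Set.Ioo (-1:ℝ) 0 = Set.Ioi (-1) ∩ Set.Iio 0 from rfl]
        exact Filter.inter_mem
          (nhdsWithin_le_nhds (Ioi_mem_nhds (by norm_num))) self_mem_nhdsWithin
      filter_upwards [hIoo] with t ht
      refine Set.mem_Icc.2 ⟨fun i => ?_, fun i => ?_⟩ <;> by_cases hi : i = 1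
      · subst hi
        show (-1:ℝ) ≤ φ t 1
        rw [hφ1]; linarith [ht.1]
      · show (-1:ℝ) ≤ φ t i
        rw [show φ t i = x i from Function.update_of_ne hi t x]
        exact hxmem.1 i
      · subst hi
        show φ t 1 ≤ (1:ℝ)
        rw [hφ1]; linarith [ht.2]
      · show φ t i ≤ (1:ℝ)
        rw [show φ t i = x i from Function.update_of_ne hi t x]
        exact hxmem.2 i
    have h2 : Filter.Tendsto φ (nhdsWithin (0:ℝ) (Set.Iio 0)) (nhdsWithin x s) :=
      tendsto_nhdsWithin_iff.2 ⟨hφt, hev⟩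
    have h3 := hcont.tendsto.comp h2
    have h4 : (fun t => heavisideForm (φ t) fun _ : Fin 1 => e 1)
        =ᶠ[nhdsWithin (0:ℝ) (Set.Iio 0)] fun _ => Real.sin (x 0) := by
      filter_upwards [self_mem_nhdsWithin] with t ht
      rw [heavisideForm_e1, hφ0, hφ1, Heaviside, if_neg (not_le.2 ht), add_zero]
    have h5 := h3.congr' h4
    have h6 : Real.sin (x 0) = heavisideForm x fun _ : Fin 1 => e 1 :=
      tendsto_nhds_unique tendsto_const_nhds h5
    rw [heavisideForm_e1, hx1, Heaviside, if_pos le_rfl] at h6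
    linarith

end
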